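/- arXiv:2104.08300 — 2 statements merged into one kernel-verified Lean document; each statement's English description precedes it below -/
import Mathlib

section
/- Second-order remainder bound: there exist constants C₁, C₂, C₃, C₄ depending only on ε and M such that | E[ν̃(X,T,Y)] − ψ_t(P) | ≤ C₁‖m̃₁−μ₁‖‖m̃_Y−μ_Y‖ + C₂‖m̃₁−μ₁‖‖π̃_t−π_t‖ + C₃‖m̃_Y−μ_Y‖‖π̃_t−π_t‖ + C₄‖m̃₁−μ₁‖², where ‖f‖ := ( E[f(X)²] )^{1/2} is the L²(P) norm of a function of X. -/
open MeasureTheory Real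

universe u

section Helpers

variable {Ω : Type*} {m0 : MeasurableSpace Ω} {P : Measure Ω}

lemma aux_integrable_of_ae_bound [IsFiniteMeasure P] {f : Ω → ℝ} (hf : AEStronglyMeasurable f P)
    {C : ℝ} (h : ∀ᵐ ω ∂P, |f ω| ≤ C) : Integrable f P :=
  (integrable_const C).mono' hf (h.mono fun ω hω => by simpa using hω)

lemma aux_swap [IsFiniteMeasure P] {m : MeasurableSpace Ω} (hm : m ≤ m0) {g f : Ω → ℝ}
    (hg : StronglyMeasurable[m] g) {C : ℝ} (hgb : ∀ ω, |g ω| ≤ C)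
    (hf : Integrable f P) :
    ∫ ω, g ω * f ω ∂P = ∫ ω, g ω * (P[f|m]) ω ∂P := by
  have hgm : AEStronglyMeasurable[m0] g P := (hg.mono hm).aestronglyMeasurable
  have h1 : Integrable (fun ω => g ω * f ω) P :=
    hf.bdd_mul hgm (Filter.Eventually.of_forall fun x => by simpa [Real.norm_eq_abs] using hgb x)
  have h2 : P[g * f|m] =ᵐ[P] g * P[f|m] := condExp_mul_of_stronglyMeasurable_left hg h1 hf
  calc ∫ ω, g ω * f ω ∂P = ∫ ω, (g * f) ω ∂P := rfl
    _ = ∫ ω, (P[g * f|m]) ω ∂P := (integral_condExp hm).symm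
    _ = ∫ ω, (g * P[f|m]) ω ∂P := integral_congr_ae h2
    _ = _ := rfl

lemma aux_cauchy_schwarz [IsFiniteMeasure P] {f g : Ω → ℝ}
    (hf : AEStronglyMeasurable f P) (hg : AEStronglyMeasurable g P)
    {Cf Cg : ℝ} (hfb : ∀ᵐ ω ∂P, |f ω| ≤ Cf) (hgb : ∀ᵐ ω ∂P, |g ω| ≤ Cg) :
    ∫ ω, |f ω * g ω| ∂P ≤ Real.sqrt (∫ ω, f ω ^ 2 ∂P) * Real.sqrt (∫ ω, g ω ^ 2 ∂P) := by
  have hpq : Real.HolderConjugate 2 2 := ⟨by norm_num, by norm_num, by norm_num⟩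
  have hfa : AEStronglyMeasurable (fun ω => |f ω|) P := by
    simpa [Real.norm_eq_abs] using hf.norm
  have hga : AEStronglyMeasurable (fun ω => |g ω|) P := by
    simpa [Real.norm_eq_abs] using hg.norm
  have hf2 : MemLp (fun ω => |f ω|) (ENNReal.ofReal 2) P := by
    refine (memLp_top_of_bound hfa Cf ?_).mono_exponent le_top
    filter_upwards [hfb] with ω hω using by simpa [Real.norm_eq_abs, abs_abs] using hω
  have hg2 : MemLp (fun ω => |g ω|) (ENNReal.ofReal 2) P := by
    refine (memLp_top_of_bound hga Cg ?_).mono_exponent le_top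
    filter_upwards [hgb] with ω hω using by simpa [Real.norm_eq_abs, abs_abs] using hω
  have key := integral_mul_le_Lp_mul_Lq_of_nonneg (μ := P) hpq
    (Filter.Eventually.of_forall fun ω => abs_nonneg (f ω))
    (Filter.Eventually.of_forall fun ω => abs_nonneg (g ω)) hf2 hg2
  have e1 : ∫ ω, |f ω| ^ (2 : ℝ) ∂P = ∫ ω, f ω ^ 2 ∂P := by
    refine integral_congr_ae (Filter.Eventually.of_forall fun ω => ?_)
    simp only [Real.rpow_two, sq_abs]
  have e2 : ∫ ω, |g ω| ^ (2 : ℝ) ∂P = ∫ ω, g ω ^ 2 ∂P := by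
    refine integral_congr_ae (Filter.Eventually.of_forall fun ω => ?_)
    simp only [Real.rpow_two, sq_abs]
  calc ∫ ω, |f ω * g ω| ∂P = ∫ ω, |f ω| * |g ω| ∂P := by simp [abs_mul]
    _ ≤ (∫ ω, |f ω| ^ (2 : ℝ) ∂P) ^ (1 / (2 : ℝ)) * (∫ ω, |g ω| ^ (2 : ℝ) ∂P) ^ (1 / (2 : ℝ)) := key
    _ = Real.sqrt (∫ ω, f ω ^ 2 ∂P) * Real.sqrt (∫ ω, g ω ^ 2 ∂P) := by
        rw [e1, e2, Real.sqrt_eq_rpow, Real.sqrt_eq_rpow]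

lemma aux_pointwise (ε M a ab b bb c cb : ℝ) (hε : 0 < ε)
    (ha : ε ≤ a) (ha' : a ≤ 1 - ε) (hab : ε ≤ ab) (hab' : ab ≤ 1 - ε)
    (hb : ε ≤ b) (hb' : b ≤ M) (hbb : ε ≤ bb) (hbb' : bb ≤ M)
    (hc : |c| ≤ M) (hcb : |cb| ≤ M) :
    |(1 - ab) / (ab * bb) * (c * a) + -((1 - ab) * cb / (ab * bb ^ 2)) * (b * a)
        + cb / bb * (1 - a) - c / b * (1 - a)|
      ≤ M / ε ^ 4 * |(bb - b) * (cb - c)| + M ^ 2 / ε ^ 4 * |(bb - b) * (ab - a)|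
        + M ^ 2 / ε ^ 4 * |(cb - c) * (ab - a)| + M / ε ^ 4 * ((bb - b) * (bb - b)) := by
  have hM : 0 < M := lt_of_lt_of_le hε (hb.trans hb')
  have hab0 : (0:ℝ) < ab := lt_of_lt_of_le hε hab
  have hbb0 : (0:ℝ) < bb := lt_of_lt_of_le hε hbb
  have hb0 : (0:ℝ) < b := lt_of_lt_of_le hε hb
  have ha0 : (0:ℝ) < a := lt_of_lt_of_le hε ha
  have key : (1 - ab) / (ab * bb) * (c * a) + -((1 - ab) * cb / (ab * bb ^ 2)) * (b * a)
        + cb / bb * (1 - a) - c / b * (1 - a)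
      = ((c * (bb - b) - b * (cb - c)) * (a * (ab - 1) * (bb - b) - bb * (ab - a)))
        / (ab * bb ^ 2 * b) := by
    field_simp
    ring
  rw [key, abs_div]
  have hdenpos : (0:ℝ) < ab * bb ^ 2 * b := by positivity
  have hden : ε ^ 4 ≤ |ab * bb ^ 2 * b| := by
    rw [abs_of_pos hdenpos, show ε ^ 4 = ε * ε ^ 2 * ε by ring]
    gcongr
  have h1 : |c * (bb - b) - b * (cb - c)| ≤ M * |bb - b| + M * |cb - c| := by
    refine (abs_sub _ _).trans ?_
    rw [abs_mul, abs_mul]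
    have hbabs : |b| ≤ M := by rw [abs_of_pos hb0]; exact hb'
    gcongr
  have h2 : |a * (ab - 1) * (bb - b) - bb * (ab - a)| ≤ |bb - b| + M * |ab - a| := by
    have h3 : |a * (ab - 1)| ≤ 1 := by
      rw [abs_mul]
      have h5 : |a| ≤ 1 := by rw [abs_of_pos ha0]; nlinarith
      have h4 : |ab - 1| ≤ 1 := by rw [abs_le]; constructor <;> nlinarith
      calc |a| * |ab - 1| ≤ 1 * 1 := mul_le_mul h5 h4 (abs_nonneg _) zero_le_one
        _ = 1 := by norm_num
    have hbbabs : |bb| ≤ M := by rw [abs_of_pos hbb0]; exact hbb'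
    refine (abs_sub _ _).trans (add_le_add ?_ ?_)
    · calc |a * (ab - 1) * (bb - b)| = |a * (ab - 1)| * |bb - b| := abs_mul _ _
        _ ≤ 1 * |bb - b| := by gcongr
        _ = |bb - b| := one_mul _
    · rw [abs_mul]; gcongr
  have hnum : |(c * (bb - b) - b * (cb - c)) * (a * (ab - 1) * (bb - b) - bb * (ab - a))|
      ≤ (M * |bb - b| + M * |cb - c|) * (|bb - b| + M * |ab - a|) := by
    rw [abs_mul]
    refine mul_le_mul h1 h2 (abs_nonneg _) ?_
    positivity
  calc |(c * (bb - b) - b * (cb - c)) * (a * (ab - 1) * (bb - b) - bb * (ab - a))|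
        / |ab * bb ^ 2 * b|
      ≤ ((M * |bb - b| + M * |cb - c|) * (|bb - b| + M * |ab - a|)) / ε ^ 4 :=
        div_le_div₀ (by positivity) hnum (by positivity) hden
    _ = M / ε ^ 4 * |(bb - b) * (cb - c)| + M ^ 2 / ε ^ 4 * |(bb - b) * (ab - a)|
        + M ^ 2 / ε ^ 4 * |(cb - c) * (ab - a)| + M / ε ^ 4 * ((bb - b) * (bb - b)) := by
      rw [show (bb - b) * (bb - b) = |bb - b| * |bb - b| from (abs_mul_abs_self _).symm]
      simp only [abs_mul]
      set db := |bb - b| with hdb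
      set dc := |cb - c| with hdc
      set da := |ab - a| with hda
      field_simp
      ring

end Helpers


set_option maxHeartbeats 2000000 in
/-- Second-order remainder bound: there exist constants `C₁, C₂, C₃, C₄`
depending only on `ε` and `M` such that
`|E[ν̃] − ψ_t(P)| ≤ C₁‖m̃₁−μ₁‖‖m̃_Y−μ_Y‖ + C₂‖m̃₁−μ₁‖‖π̃_t−π_t‖ + C₃‖m̃_Y−μ_Y‖‖π̃_t−π_t‖
  + C₄‖m̃₁−μ₁‖²`, where `‖f‖ = (E[f(X)²])^{1/2}`. -/


theorem second_order_remainder_bound (ε M : ℝ) (hε : 0 < ε) (hεM : ε ≤ M) :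
    ∃ C₁ C₂ C₃ C₄ : ℝ,
      ∀ (Ω : Type u) [MeasurableSpace Ω] (P : Measure Ω) [IsProbabilityMeasure P]
        (p : ℕ) (X : Ω → (Fin p → ℝ)) (T : Ω → ℝ) (Y : Ω → ℝ),
        Measurable X → Measurable T → Measurable Y →
        (∀ ω, T ω = 0 ∨ T ω = 1) →
        ∀ (t : ℝ), (t = 0 ∨ t = 1) →
        ∀ (s : ℝ → ℝ), Measurable s →
        ∀ (γ : ℝ)
          (πt πs : (Fin p → ℝ) → ℝ), Measurable πt → Measurable πs →
        -- versions of the conditional treatment probabilities given `σ(X)`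
        ((fun ω => πt (X ω)) =ᵐ[P]
          P[(fun ω => if T ω = t then (1 : ℝ) else 0) |
            MeasurableSpace.comap X inferInstance]) →
        ((fun ω => πs (X ω)) =ᵐ[P]
          P[(fun ω => if T ω = 1 - t then (1 : ℝ) else 0) |
            MeasurableSpace.comap X inferInstance]) →
        -- positivity
        (∀ᵐ ω ∂P, ε ≤ πt (X ω) ∧ πt (X ω) ≤ 1 - ε) →
        -- integrability
        Integrable Y P →
        Integrable (fun ω => Real.exp (γ * s (Y ω))) P →
        Integrable (fun ω => Y ω * Real.exp (γ * s (Y ω))) P →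
        -- versions of the conditional means: `muY = μ_t(Y;X)`, `muE = μ₁(X)`, `muYE = μ_Y(X)`
        ∀ (muY muE muYE : (Fin p → ℝ) → ℝ),
        Measurable muY → Measurable muE → Measurable muYE →
        ((fun ω => muY (X ω)) =ᵐ[P] fun ω =>
          (P[(fun ω => Y ω * (if T ω = t then (1 : ℝ) else 0)) |
            MeasurableSpace.comap X inferInstance]) ω / πt (X ω)) →
        ((fun ω => muE (X ω)) =ᵐ[P] fun ω =>
          (P[(fun ω => Real.exp (γ * s (Y ω)) * (if T ω = t then (1 : ℝ) else 0)) |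
            MeasurableSpace.comap X inferInstance]) ω / πt (X ω)) →
        ((fun ω => muYE (X ω)) =ᵐ[P] fun ω =>
          (P[(fun ω => Y ω * Real.exp (γ * s (Y ω)) * (if T ω = t then (1 : ℝ) else 0)) |
            MeasurableSpace.comap X inferInstance]) ω / πt (X ω)) →
        (∀ᵐ ω ∂P, ε ≤ muE (X ω) ∧ muE (X ω) ≤ M) →
        (∀ᵐ ω ∂P, |muYE (X ω)| ≤ M) →
        -- nuisance functions
        ∀ (tπt tm1 tmY : (Fin p → ℝ) → ℝ),
        Measurable tπt → Measurable tm1 → Measurable tmY →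
        (∀ x, tπt x ∈ Set.Icc ε (1 - ε)) →
        (∀ x, tm1 x ∈ Set.Icc ε M) →
        (∀ x, tmY x ∈ Set.Icc (-M) M) →
        -- the bound
        |(∫ ω, ((if T ω = t then (1 : ℝ) else 0) *
              (Y ω + Y ω * Real.exp (γ * s (Y ω)) * (1 - tπt (X ω)) / (tπt (X ω) * tm1 (X ω))
                - Real.exp (γ * s (Y ω)) * (1 - tπt (X ω)) * tmY (X ω) /
                    (tπt (X ω) * tm1 (X ω) ^ 2))
            + (if T ω = 1 - t then (1 : ℝ) else 0) * (tmY (X ω) / tm1 (X ω))) ∂P)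
          - (∫ ω, (muY (X ω) * πt (X ω) + (muYE (X ω) / muE (X ω)) * πs (X ω)) ∂P)| ≤
          C₁ * (Real.sqrt (∫ ω, (tm1 (X ω) - muE (X ω)) ^ 2 ∂P) *
                Real.sqrt (∫ ω, (tmY (X ω) - muYE (X ω)) ^ 2 ∂P)) +
          C₂ * (Real.sqrt (∫ ω, (tm1 (X ω) - muE (X ω)) ^ 2 ∂P) *
                Real.sqrt (∫ ω, (tπt (X ω) - πt (X ω)) ^ 2 ∂P)) +
          C₃ * (Real.sqrt (∫ ω, (tmY (X ω) - muYE (X ω)) ^ 2 ∂P) *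
                Real.sqrt (∫ ω, (tπt (X ω) - πt (X ω)) ^ 2 ∂P)) +
          C₄ * Real.sqrt (∫ ω, (tm1 (X ω) - muE (X ω)) ^ 2 ∂P) ^ 2 := by
  refine ⟨M / ε ^ 4, M ^ 2 / ε ^ 4, M ^ 2 / ε ^ 4, M / ε ^ 4, ?_⟩
  intro Ω mΩ P hP p X T Y hX hT hYm hT01 t ht s hs γ πt πs hπtm hπsm hπtv hπsv hpos
    hYint hEint hYEint muY muE muYE hmuYm hmuEm hmuYEm hmuYv hmuEv hmuYEv hmuEb hmuYEb
    tπt tm1 tmY htπtm htm1m htmYm htπtb htm1b htmYb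
  have hM : 0 < M := lt_of_lt_of_le hε hεM
  have hm : MeasurableSpace.comap X inferInstance ≤ mΩ := hX.comap_le
  have hXm : Measurable[MeasurableSpace.comap X inferInstance] X := fun _ hsx => ⟨_, hsx, rfl⟩
  -- measurability
  have hAm : Measurable (fun ω => if T ω = t then (1:ℝ) else 0) :=
    Measurable.ite (hT (measurableSet_singleton t)) measurable_const measurable_const
  have hBm : Measurable (fun ω => if T ω = 1 - t then (1:ℝ) else 0) :=
    Measurable.ite (hT (measurableSet_singleton (1 - t))) measurable_const measurable_const
  have hg₁m : Measurable (fun x => (1 - tπt x) / (tπt x * tm1 x)) :=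
    (measurable_const.sub htπtm).div (htπtm.mul htm1m)
  have hg₂m : Measurable (fun x => -((1 - tπt x) * tmY x / (tπt x * tm1 x ^ 2))) :=
    (((measurable_const.sub htπtm).mul htmYm).div (htπtm.mul (htm1m.pow_const 2))).neg
  have hg₃m : Measurable (fun x => tmY x / tm1 x) := htmYm.div htm1m
  -- bounds on nuisance ratios
  have habs1 : ∀ x, |1 - tπt x| ≤ 1 := fun x => by
    obtain ⟨h1, h2⟩ := htπtb x; rw [abs_le]; constructor <;> nlinarith
  have hg₁b : ∀ x, |(1 - tπt x) / (tπt x * tm1 x)| ≤ 1 / ε ^ 2 := fun x => by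
    obtain ⟨h1, h2⟩ := htπtb x; obtain ⟨h3, h4⟩ := htm1b x
    rw [abs_div]
    refine div_le_div₀ (by norm_num) (habs1 x) (by positivity) ?_
    rw [abs_mul, abs_of_pos (lt_of_lt_of_le hε h1), abs_of_pos (lt_of_lt_of_le hε h3),
      show ε ^ 2 = ε * ε by ring]
    gcongr
    exact hε.le.trans h1
  have hg₂b : ∀ x, |-((1 - tπt x) * tmY x / (tπt x * tm1 x ^ 2))| ≤ M / ε ^ 3 := fun x => by
    obtain ⟨h1, h2⟩ := htπtb x; obtain ⟨h3, h4⟩ := htm1b x; obtain ⟨h5, h6⟩ := htmYb x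
    rw [abs_neg, abs_div]
    refine div_le_div₀ hM.le ?_ (by positivity) ?_
    · rw [abs_mul]
      calc |1 - tπt x| * |tmY x| ≤ 1 * M :=
            mul_le_mul (habs1 x) (abs_le.mpr ⟨h5, h6⟩) (abs_nonneg _) zero_le_one
        _ = M := one_mul M
    · rw [abs_mul, abs_of_pos (lt_of_lt_of_le hε h1),
        abs_of_pos (pow_pos (lt_of_lt_of_le hε h3) 2), show ε ^ 3 = ε * ε ^ 2 by ring]
      gcongr
      exact hε.le.trans h1
  have hg₃b : ∀ x, |tmY x / tm1 x| ≤ M / ε := fun x => by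
    obtain ⟨h3, h4⟩ := htm1b x; obtain ⟨h5, h6⟩ := htmYb x
    rw [abs_div]
    refine div_le_div₀ hM.le (abs_le.mpr ⟨h5, h6⟩) hε ?_
    rw [abs_of_pos (lt_of_lt_of_le hε h3)]; exact h3
  -- integrability of the building blocks
  have hiA : ∀ x : Ω, ‖if T x = t then (1:ℝ) else 0‖ ≤ 1 := fun x => by split <;> simp
  have hiB : ∀ x : Ω, ‖if T x = 1 - t then (1:ℝ) else 0‖ ≤ 1 := fun x => by split <;> simp
  have hf₁int : Integrable (fun ω => Y ω * (if T ω = t then (1:ℝ) else 0)) P :=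
    (hYint.bdd_mul hAm.aestronglyMeasurable (Filter.Eventually.of_forall hiA)).congr
      (Filter.Eventually.of_forall fun ω => mul_comm _ _)
  have hf₂int : Integrable (fun ω => Real.exp (γ * s (Y ω)) * (if T ω = t then (1:ℝ) else 0)) P :=
    (hEint.bdd_mul hAm.aestronglyMeasurable (Filter.Eventually.of_forall hiA)).congr
      (Filter.Eventually.of_forall fun ω => mul_comm _ _)
  have hf₃int : Integrable
      (fun ω => Y ω * Real.exp (γ * s (Y ω)) * (if T ω = t then (1:ℝ) else 0)) P :=
    (hYEint.bdd_mul hAm.aestronglyMeasurable (Filter.Eventually.of_forall hiA)).congr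
      (Filter.Eventually.of_forall fun ω => mul_comm _ _)
  have hf₄int : Integrable (fun ω => if T ω = 1 - t then (1:ℝ) else 0) P :=
    aux_integrable_of_ae_bound hBm.aestronglyMeasurable
      (Filter.Eventually.of_forall fun ω => by simpa using hiB ω)
  have hAint : Integrable (fun ω => if T ω = t then (1:ℝ) else 0) P :=
    aux_integrable_of_ae_bound hAm.aestronglyMeasurable
      (Filter.Eventually.of_forall fun ω => by simpa using hiA ω)
  -- conditional expectation identities
  have hce₁ : P[(fun ω => Y ω * (if T ω = t then (1 : ℝ) else 0)) |
      MeasurableSpace.comap X inferInstance] =ᵐ[P] fun ω => muY (X ω) * πt (X ω) := by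
    filter_upwards [hmuYv, hpos] with ω h1 h2
    have hne : πt (X ω) ≠ 0 := (lt_of_lt_of_le hε h2.1).ne'
    rw [h1, div_mul_cancel₀ _ hne]
  have hce₂ : P[(fun ω => Real.exp (γ * s (Y ω)) * (if T ω = t then (1 : ℝ) else 0)) |
      MeasurableSpace.comap X inferInstance] =ᵐ[P] fun ω => muE (X ω) * πt (X ω) := by
    filter_upwards [hmuEv, hpos] with ω h1 h2
    have hne : πt (X ω) ≠ 0 := (lt_of_lt_of_le hε h2.1).ne'
    rw [h1, div_mul_cancel₀ _ hne]
  have hce₃ : P[(fun ω => Y ω * Real.exp (γ * s (Y ω)) * (if T ω = t then (1 : ℝ) else 0)) |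
      MeasurableSpace.comap X inferInstance] =ᵐ[P] fun ω => muYE (X ω) * πt (X ω) := by
    filter_upwards [hmuYEv, hpos] with ω h1 h2
    have hne : πt (X ω) ≠ 0 := (lt_of_lt_of_le hε h2.1).ne'
    rw [h1, div_mul_cancel₀ _ hne]
  -- πs = 1 - πt a.e.
  have hBA : (fun ω => if T ω = 1 - t then (1:ℝ) else 0)
      = (fun _ : Ω => (1:ℝ)) - fun ω => if T ω = t then (1:ℝ) else 0 := by
    funext ω
    simp only [Pi.sub_apply]
    rcases hT01 ω with h | h <;> rcases ht with h' | h' <;> norm_num [h, h']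
  have hπs_eq : (fun ω => πs (X ω)) =ᵐ[P] fun ω => 1 - πt (X ω) := by
    refine hπsv.trans ?_
    rw [hBA]
    refine (condExp_sub (integrable_const (1:ℝ)) hAint _).trans ?_
    have h3 : P[(fun _ : Ω => (1:ℝ)) | MeasurableSpace.comap X inferInstance]
        = fun _ => (1:ℝ) := condExp_const hm (1:ℝ)
    filter_upwards [hπtv] with ω hω
    simp only [Pi.sub_apply, h3]
    rw [← hω]
  -- the four computed integrals
  have key₁ : ∫ ω, Y ω * (if T ω = t then (1:ℝ) else 0) ∂P
      = ∫ ω, muY (X ω) * πt (X ω) ∂P := by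
    rw [← integral_condExp hm (f := fun ω => Y ω * (if T ω = t then (1:ℝ) else 0))]
    exact integral_congr_ae hce₁
  have sm₁ : StronglyMeasurable[MeasurableSpace.comap X inferInstance]
      (fun ω => (1 - tπt (X ω)) / (tπt (X ω) * tm1 (X ω))) :=
    (hg₁m.comp hXm).stronglyMeasurable
  have sm₂ : StronglyMeasurable[MeasurableSpace.comap X inferInstance]
      (fun ω => -((1 - tπt (X ω)) * tmY (X ω) / (tπt (X ω) * tm1 (X ω) ^ 2))) :=
    (hg₂m.comp hXm).stronglyMeasurable
  have sm₃ : StronglyMeasurable[MeasurableSpace.comap X inferInstance]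
      (fun ω => tmY (X ω) / tm1 (X ω)) :=
    (hg₃m.comp hXm).stronglyMeasurable
  have key₂ : ∫ ω, (1 - tπt (X ω)) / (tπt (X ω) * tm1 (X ω)) *
        (Y ω * Real.exp (γ * s (Y ω)) * (if T ω = t then (1:ℝ) else 0)) ∂P
      = ∫ ω, (1 - tπt (X ω)) / (tπt (X ω) * tm1 (X ω)) * (muYE (X ω) * πt (X ω)) ∂P := by
    rw [aux_swap hm sm₁ (fun ω => hg₁b (X ω)) hf₃int]
    refine integral_congr_ae ?_
    filter_upwards [hce₃] with ω h1
    rw [h1]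
  have key₃ : ∫ ω, -((1 - tπt (X ω)) * tmY (X ω) / (tπt (X ω) * tm1 (X ω) ^ 2)) *
        (Real.exp (γ * s (Y ω)) * (if T ω = t then (1:ℝ) else 0)) ∂P
      = ∫ ω, -((1 - tπt (X ω)) * tmY (X ω) / (tπt (X ω) * tm1 (X ω) ^ 2)) *
        (muE (X ω) * πt (X ω)) ∂P := by
    rw [aux_swap hm sm₂ (fun ω => hg₂b (X ω)) hf₂int]
    refine integral_congr_ae ?_
    filter_upwards [hce₂] with ω h1
    rw [h1]
  have key₄ : ∫ ω, tmY (X ω) / tm1 (X ω) * (if T ω = 1 - t then (1:ℝ) else 0) ∂P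
      = ∫ ω, tmY (X ω) / tm1 (X ω) * πs (X ω) ∂P := by
    rw [aux_swap hm sm₃ (fun ω => hg₃b (X ω)) hf₄int]
    refine integral_congr_ae ?_
    filter_upwards [hπsv] with ω h1
    rw [← h1]
  -- ae bounds on mean functions
  have hπtb1 : ∀ᵐ ω ∂P, |πt (X ω)| ≤ 1 := by
    filter_upwards [hpos] with ω h
    rw [abs_le]; constructor <;> nlinarith [h.1, h.2]
  have hπsb1 : ∀ᵐ ω ∂P, |πs (X ω)| ≤ 1 := by
    filter_upwards [hπs_eq, hpos] with ω h1 h2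
    rw [h1, abs_le]; constructor <;> nlinarith [h2.1, h2.2]
  have hmuEb1 : ∀ᵐ ω ∂P, |muE (X ω)| ≤ M := by
    filter_upwards [hmuEb] with ω h
    rw [abs_of_pos (lt_of_lt_of_le hε h.1)]; exact h.2
  -- integrability of the conditional-mean products
  have iu₂ : Integrable (fun ω => (1 - tπt (X ω)) / (tπt (X ω) * tm1 (X ω)) *
      (muYE (X ω) * πt (X ω))) P := by
    refine aux_integrable_of_ae_bound
      ((hg₁m.comp hX).mul ((hmuYEm.comp hX).mul (hπtm.comp hX))).aestronglyMeasurable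
      (C := 1 / ε ^ 2 * (M * 1)) ?_
    filter_upwards [hmuYEb, hπtb1] with ω h1 h2
    rw [abs_mul, abs_mul]
    exact mul_le_mul (hg₁b _) (mul_le_mul h1 h2 (abs_nonneg _) hM.le) (by positivity)
      (by positivity)
  have iu₃ : Integrable (fun ω => -((1 - tπt (X ω)) * tmY (X ω) / (tπt (X ω) * tm1 (X ω) ^ 2)) *
      (muE (X ω) * πt (X ω))) P := by
    refine aux_integrable_of_ae_bound
      ((hg₂m.comp hX).mul ((hmuEm.comp hX).mul (hπtm.comp hX))).aestronglyMeasurable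
      (C := M / ε ^ 3 * (M * 1)) ?_
    filter_upwards [hmuEb1, hπtb1] with ω h1 h2
    rw [abs_mul, abs_mul]
    exact mul_le_mul (hg₂b _) (mul_le_mul h1 h2 (abs_nonneg _) hM.le) (by positivity)
      (by positivity)
  have iu₄ : Integrable (fun ω => tmY (X ω) / tm1 (X ω) * πs (X ω)) P := by
    refine aux_integrable_of_ae_bound
      ((hg₃m.comp hX).mul (hπsm.comp hX)).aestronglyMeasurable (C := M / ε * 1) ?_
    filter_upwards [hπsb1] with ω h2
    rw [abs_mul]
    exact mul_le_mul (hg₃b _) h2 (abs_nonneg _) (by positivity)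
  have iu₅ : Integrable (fun ω => muYE (X ω) / muE (X ω) * πs (X ω)) P := by
    refine aux_integrable_of_ae_bound
      (((hmuYEm.comp hX).div (hmuEm.comp hX)).mul (hπsm.comp hX)).aestronglyMeasurable
      (C := M / ε * 1) ?_
    filter_upwards [hmuYEb, hmuEb, hπsb1] with ω h1 h2 h3
    rw [abs_mul, abs_div]
    have h4 : ε ≤ |muE (X ω)| := by
      rw [abs_of_pos (lt_of_lt_of_le hε h2.1)]; exact h2.1
    exact mul_le_mul (div_le_div₀ hM.le h1 hε h4) h3 (abs_nonneg _) (by positivity)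
  have iψ₁ : Integrable (fun ω => muY (X ω) * πt (X ω)) P := integrable_condExp.congr hce₁
  -- split the first integral
  have hsplit : (fun ω => ((if T ω = t then (1 : ℝ) else 0) *
        (Y ω + Y ω * Real.exp (γ * s (Y ω)) * (1 - tπt (X ω)) / (tπt (X ω) * tm1 (X ω))
          - Real.exp (γ * s (Y ω)) * (1 - tπt (X ω)) * tmY (X ω) /
              (tπt (X ω) * tm1 (X ω) ^ 2))
      + (if T ω = 1 - t then (1 : ℝ) else 0) * (tmY (X ω) / tm1 (X ω))))
      = fun ω => Y ω * (if T ω = t then (1:ℝ) else 0)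
        + ((1 - tπt (X ω)) / (tπt (X ω) * tm1 (X ω)) *
            (Y ω * Real.exp (γ * s (Y ω)) * (if T ω = t then (1:ℝ) else 0))
        + (-((1 - tπt (X ω)) * tmY (X ω) / (tπt (X ω) * tm1 (X ω) ^ 2)) *
            (Real.exp (γ * s (Y ω)) * (if T ω = t then (1:ℝ) else 0))
        + tmY (X ω) / tm1 (X ω) * (if T ω = 1 - t then (1:ℝ) else 0))) := by
    funext ω; ring
  have it₂ : Integrable (fun ω => (1 - tπt (X ω)) / (tπt (X ω) * tm1 (X ω)) *
      (Y ω * Real.exp (γ * s (Y ω)) * (if T ω = t then (1:ℝ) else 0))) P :=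
    hf₃int.bdd_mul (hg₁m.comp hX).aestronglyMeasurable
      (Filter.Eventually.of_forall fun x => by rw [Real.norm_eq_abs]; exact hg₁b (X x))
  have it₃ : Integrable (fun ω => -((1 - tπt (X ω)) * tmY (X ω) / (tπt (X ω) * tm1 (X ω) ^ 2)) *
      (Real.exp (γ * s (Y ω)) * (if T ω = t then (1:ℝ) else 0))) P :=
    hf₂int.bdd_mul (hg₂m.comp hX).aestronglyMeasurable
      (Filter.Eventually.of_forall fun x => by rw [Real.norm_eq_abs]; exact hg₂b (X x))
  have it₄ : Integrable (fun ω => tmY (X ω) / tm1 (X ω) *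
      (if T ω = 1 - t then (1:ℝ) else 0)) P :=
    hf₄int.bdd_mul (hg₃m.comp hX).aestronglyMeasurable
      (Filter.Eventually.of_forall fun x => by rw [Real.norm_eq_abs]; exact hg₃b (X x))
  have hIeq : (∫ ω, ((if T ω = t then (1 : ℝ) else 0) *
        (Y ω + Y ω * Real.exp (γ * s (Y ω)) * (1 - tπt (X ω)) / (tπt (X ω) * tm1 (X ω))
          - Real.exp (γ * s (Y ω)) * (1 - tπt (X ω)) * tmY (X ω) /
              (tπt (X ω) * tm1 (X ω) ^ 2))
      + (if T ω = 1 - t then (1 : ℝ) else 0) * (tmY (X ω) / tm1 (X ω))) ∂P)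
      = ∫ ω, muY (X ω) * πt (X ω) ∂P
        + ((∫ ω, (1 - tπt (X ω)) / (tπt (X ω) * tm1 (X ω)) * (muYE (X ω) * πt (X ω)) ∂P)
        + ((∫ ω, -((1 - tπt (X ω)) * tmY (X ω) / (tπt (X ω) * tm1 (X ω) ^ 2)) *
              (muE (X ω) * πt (X ω)) ∂P)
        + ∫ ω, tmY (X ω) / tm1 (X ω) * πs (X ω) ∂P)) := by
    have it₃₄ : Integrable (fun ω => -((1 - tπt (X ω)) * tmY (X ω) / (tπt (X ω) * tm1 (X ω) ^ 2)) *
        (Real.exp (γ * s (Y ω)) * (if T ω = t then (1:ℝ) else 0))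
        + tmY (X ω) / tm1 (X ω) * (if T ω = 1 - t then (1:ℝ) else 0)) P := it₃.add it₄
    have it₂₃₄ : Integrable (fun ω => (1 - tπt (X ω)) / (tπt (X ω) * tm1 (X ω)) *
        (Y ω * Real.exp (γ * s (Y ω)) * (if T ω = t then (1:ℝ) else 0))
        + (-((1 - tπt (X ω)) * tmY (X ω) / (tπt (X ω) * tm1 (X ω) ^ 2)) *
            (Real.exp (γ * s (Y ω)) * (if T ω = t then (1:ℝ) else 0))
          + tmY (X ω) / tm1 (X ω) * (if T ω = 1 - t then (1:ℝ) else 0))) P := it₂.add it₃₄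
    rw [hsplit, integral_add hf₁int it₂₃₄, integral_add it₂ it₃₄,
      integral_add it₃ it₄, key₁, key₂, key₃, key₄]
  have hJeq : ∫ ω, (muY (X ω) * πt (X ω) + muYE (X ω) / muE (X ω) * πs (X ω)) ∂P
      = ∫ ω, muY (X ω) * πt (X ω) ∂P + ∫ ω, muYE (X ω) / muE (X ω) * πs (X ω) ∂P :=
    integral_add iψ₁ iu₅
  rw [hIeq, hJeq, show ∀ A B C D E : ℝ, (A + (B + (C + D))) - (A + E) = B + C + D - E from
    fun _ _ _ _ _ => by ring]
  have iu₂₃ : Integrable (fun ω => (1 - tπt (X ω)) / (tπt (X ω) * tm1 (X ω)) * (muYE (X ω) * πt (X ω))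
      + -((1 - tπt (X ω)) * tmY (X ω) / (tπt (X ω) * tm1 (X ω) ^ 2)) * (muE (X ω) * πt (X ω))) P :=
    iu₂.add iu₃
  have iu₂₃₄ : Integrable (fun ω => ((1 - tπt (X ω)) / (tπt (X ω) * tm1 (X ω)) * (muYE (X ω) * πt (X ω))
      + -((1 - tπt (X ω)) * tmY (X ω) / (tπt (X ω) * tm1 (X ω) ^ 2)) * (muE (X ω) * πt (X ω)))
      + tmY (X ω) / tm1 (X ω) * πs (X ω)) P := iu₂₃.add iu₄
  rw [← integral_add iu₂ iu₃, ← integral_add iu₂₃ iu₄, ← integral_sub iu₂₃₄ iu₅]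
  -- measurability and bounds for the deltas
  have hΔbm : Measurable (fun ω => tm1 (X ω) - muE (X ω)) :=
    (htm1m.comp hX).sub (hmuEm.comp hX)
  have hΔcm : Measurable (fun ω => tmY (X ω) - muYE (X ω)) :=
    (htmYm.comp hX).sub (hmuYEm.comp hX)
  have hΔam : Measurable (fun ω => tπt (X ω) - πt (X ω)) :=
    (htπtm.comp hX).sub (hπtm.comp hX)
  have hΔb_b : ∀ᵐ ω ∂P, |tm1 (X ω) - muE (X ω)| ≤ 2 * M := by
    filter_upwards [hmuEb1] with ω h1
    refine (abs_sub _ _).trans ?_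
    have h2 : |tm1 (X ω)| ≤ M := by
      rw [abs_of_pos (lt_of_lt_of_le hε (htm1b _).1)]; exact (htm1b _).2
    linarith
  have hΔc_b : ∀ᵐ ω ∂P, |tmY (X ω) - muYE (X ω)| ≤ 2 * M := by
    filter_upwards [hmuYEb] with ω h1
    refine (abs_sub _ _).trans ?_
    have h2 : |tmY (X ω)| ≤ M := abs_le.mpr ⟨(htmYb _).1, (htmYb _).2⟩
    linarith
  have hΔa_b : ∀ᵐ ω ∂P, |tπt (X ω) - πt (X ω)| ≤ 2 := by
    filter_upwards [hπtb1] with ω h1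
    refine (abs_sub _ _).trans ?_
    have h2 : |tπt (X ω)| ≤ 1 := by
      obtain ⟨h3, h4⟩ := htπtb (X ω)
      rw [abs_le]; constructor <;> nlinarith
    linarith
  -- integrability of the quadratic terms
  have iv₁ : Integrable (fun ω => |(tm1 (X ω) - muE (X ω)) * (tmY (X ω) - muYE (X ω))|) P := by
    refine aux_integrable_of_ae_bound ((hΔbm.mul hΔcm).abs.aestronglyMeasurable)
      (C := 2 * M * (2 * M)) ?_
    filter_upwards [hΔb_b, hΔc_b] with ω h1 h2
    rw [abs_abs, abs_mul]
    exact mul_le_mul h1 h2 (abs_nonneg _) (by positivity)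
  have iv₂ : Integrable (fun ω => |(tm1 (X ω) - muE (X ω)) * (tπt (X ω) - πt (X ω))|) P := by
    refine aux_integrable_of_ae_bound ((hΔbm.mul hΔam).abs.aestronglyMeasurable)
      (C := 2 * M * 2) ?_
    filter_upwards [hΔb_b, hΔa_b] with ω h1 h2
    rw [abs_abs, abs_mul]
    exact mul_le_mul h1 h2 (abs_nonneg _) (by positivity)
  have iv₃ : Integrable (fun ω => |(tmY (X ω) - muYE (X ω)) * (tπt (X ω) - πt (X ω))|) P := by
    refine aux_integrable_of_ae_bound ((hΔcm.mul hΔam).abs.aestronglyMeasurable)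
      (C := 2 * M * 2) ?_
    filter_upwards [hΔc_b, hΔa_b] with ω h1 h2
    rw [abs_abs, abs_mul]
    exact mul_le_mul h1 h2 (abs_nonneg _) (by positivity)
  have iv₄ : Integrable (fun ω => (tm1 (X ω) - muE (X ω)) * (tm1 (X ω) - muE (X ω))) P := by
    refine aux_integrable_of_ae_bound ((hΔbm.mul hΔbm).aestronglyMeasurable)
      (C := 2 * M * (2 * M)) ?_
    filter_upwards [hΔb_b] with ω h1
    rw [abs_mul]
    exact mul_le_mul h1 h1 (abs_nonneg _) (by positivity)
  have hGi₁ : Integrable (fun ω => M / ε ^ 4 *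
      |(tm1 (X ω) - muE (X ω)) * (tmY (X ω) - muYE (X ω))|) P := iv₁.const_mul _
  have hGi₂ : Integrable (fun ω => M ^ 2 / ε ^ 4 *
      |(tm1 (X ω) - muE (X ω)) * (tπt (X ω) - πt (X ω))|) P := iv₂.const_mul _
  have hGi₃ : Integrable (fun ω => M ^ 2 / ε ^ 4 *
      |(tmY (X ω) - muYE (X ω)) * (tπt (X ω) - πt (X ω))|) P := iv₃.const_mul _
  have hGi₄ : Integrable (fun ω => M / ε ^ 4 *
      ((tm1 (X ω) - muE (X ω)) * (tm1 (X ω) - muE (X ω)))) P := iv₄.const_mul _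
  have hFint : Integrable (fun ω =>
      (1 - tπt (X ω)) / (tπt (X ω) * tm1 (X ω)) * (muYE (X ω) * πt (X ω))
      + -((1 - tπt (X ω)) * tmY (X ω) / (tπt (X ω) * tm1 (X ω) ^ 2)) * (muE (X ω) * πt (X ω))
      + tmY (X ω) / tm1 (X ω) * πs (X ω)
      - muYE (X ω) / muE (X ω) * πs (X ω)) P := (iu₂₃.add iu₄).sub iu₅
  -- the pointwise bound
  have hbound : ∀ᵐ ω ∂P, |(1 - tπt (X ω)) / (tπt (X ω) * tm1 (X ω)) * (muYE (X ω) * πt (X ω))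
      + -((1 - tπt (X ω)) * tmY (X ω) / (tπt (X ω) * tm1 (X ω) ^ 2)) * (muE (X ω) * πt (X ω))
      + tmY (X ω) / tm1 (X ω) * πs (X ω)
      - muYE (X ω) / muE (X ω) * πs (X ω)|
      ≤ M / ε ^ 4 * |(tm1 (X ω) - muE (X ω)) * (tmY (X ω) - muYE (X ω))|
        + M ^ 2 / ε ^ 4 * |(tm1 (X ω) - muE (X ω)) * (tπt (X ω) - πt (X ω))|
        + M ^ 2 / ε ^ 4 * |(tmY (X ω) - muYE (X ω)) * (tπt (X ω) - πt (X ω))|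
        + M / ε ^ 4 * ((tm1 (X ω) - muE (X ω)) * (tm1 (X ω) - muE (X ω))) := by
    filter_upwards [hpos, hmuEb, hmuYEb, hπs_eq] with ω h1 h2 h3 h4
    rw [h4]
    exact aux_pointwise ε M (πt (X ω)) (tπt (X ω)) (muE (X ω)) (tm1 (X ω)) (muYE (X ω))
      (tmY (X ω)) hε h1.1 h1.2 (htπtb _).1 (htπtb _).2 h2.1 h2.2 (htm1b _).1 (htm1b _).2 h3
      (abs_le.mpr ⟨(htmYb _).1, (htmYb _).2⟩)
  -- Cauchy–Schwarz estimates
  have cs₁ := aux_cauchy_schwarz (P := P) hΔbm.aestronglyMeasurable hΔcm.aestronglyMeasurable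
    hΔb_b hΔc_b
  have cs₂ := aux_cauchy_schwarz (P := P) hΔbm.aestronglyMeasurable hΔam.aestronglyMeasurable
    hΔb_b hΔa_b
  have cs₃ := aux_cauchy_schwarz (P := P) hΔcm.aestronglyMeasurable hΔam.aestronglyMeasurable
    hΔc_b hΔa_b
  have e4 : ∫ ω, (tm1 (X ω) - muE (X ω)) * (tm1 (X ω) - muE (X ω)) ∂P
      = Real.sqrt (∫ ω, (tm1 (X ω) - muE (X ω)) ^ 2 ∂P) ^ 2 := by
    rw [Real.sq_sqrt (integral_nonneg fun ω => sq_nonneg _)]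
    exact integral_congr_ae (Filter.Eventually.of_forall fun ω => (sq (tm1 (X ω) - muE (X ω))).symm)
  calc |∫ ω, ((1 - tπt (X ω)) / (tπt (X ω) * tm1 (X ω)) * (muYE (X ω) * πt (X ω))
        + -((1 - tπt (X ω)) * tmY (X ω) / (tπt (X ω) * tm1 (X ω) ^ 2)) * (muE (X ω) * πt (X ω))
        + tmY (X ω) / tm1 (X ω) * πs (X ω)
        - muYE (X ω) / muE (X ω) * πs (X ω)) ∂P|
      ≤ ∫ ω, |(1 - tπt (X ω)) / (tπt (X ω) * tm1 (X ω)) * (muYE (X ω) * πt (X ω))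
        + -((1 - tπt (X ω)) * tmY (X ω) / (tπt (X ω) * tm1 (X ω) ^ 2)) * (muE (X ω) * πt (X ω))
        + tmY (X ω) / tm1 (X ω) * πs (X ω)
        - muYE (X ω) / muE (X ω) * πs (X ω)| ∂P := by
        have h := norm_integral_le_integral_norm (μ := P)
          (f := fun ω => (1 - tπt (X ω)) / (tπt (X ω) * tm1 (X ω)) * (muYE (X ω) * πt (X ω))
            + -((1 - tπt (X ω)) * tmY (X ω) / (tπt (X ω) * tm1 (X ω) ^ 2)) *
                (muE (X ω) * πt (X ω))
            + tmY (X ω) / tm1 (X ω) * πs (X ω)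
            - muYE (X ω) / muE (X ω) * πs (X ω))
        simpa only [Real.norm_eq_abs] using h
    _ ≤ ∫ ω, (M / ε ^ 4 * |(tm1 (X ω) - muE (X ω)) * (tmY (X ω) - muYE (X ω))|
        + M ^ 2 / ε ^ 4 * |(tm1 (X ω) - muE (X ω)) * (tπt (X ω) - πt (X ω))|
        + M ^ 2 / ε ^ 4 * |(tmY (X ω) - muYE (X ω)) * (tπt (X ω) - πt (X ω))|
        + M / ε ^ 4 * ((tm1 (X ω) - muE (X ω)) * (tm1 (X ω) - muE (X ω)))) ∂P :=
        integral_mono_ae hFint.abs (((hGi₁.add hGi₂).add hGi₃).add hGi₄) hbound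
    _ = M / ε ^ 4 * ∫ ω, |(tm1 (X ω) - muE (X ω)) * (tmY (X ω) - muYE (X ω))| ∂P
        + M ^ 2 / ε ^ 4 * ∫ ω, |(tm1 (X ω) - muE (X ω)) * (tπt (X ω) - πt (X ω))| ∂P
        + M ^ 2 / ε ^ 4 * ∫ ω, |(tmY (X ω) - muYE (X ω)) * (tπt (X ω) - πt (X ω))| ∂P
        + M / ε ^ 4 * ∫ ω, (tm1 (X ω) - muE (X ω)) * (tm1 (X ω) - muE (X ω)) ∂P := by
        have hG₁₂ : Integrable (fun ω => M / ε ^ 4 *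
            |(tm1 (X ω) - muE (X ω)) * (tmY (X ω) - muYE (X ω))|
            + M ^ 2 / ε ^ 4 * |(tm1 (X ω) - muE (X ω)) * (tπt (X ω) - πt (X ω))|) P :=
          hGi₁.add hGi₂
        have hG₁₂₃ : Integrable (fun ω => (M / ε ^ 4 *
            |(tm1 (X ω) - muE (X ω)) * (tmY (X ω) - muYE (X ω))|
            + M ^ 2 / ε ^ 4 * |(tm1 (X ω) - muE (X ω)) * (tπt (X ω) - πt (X ω))|)
            + M ^ 2 / ε ^ 4 * |(tmY (X ω) - muYE (X ω)) * (tπt (X ω) - πt (X ω))|) P :=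
          hG₁₂.add hGi₃
        rw [integral_add hG₁₂₃ hGi₄, integral_add hG₁₂ hGi₃,
          integral_add hGi₁ hGi₂, integral_const_mul, integral_const_mul, integral_const_mul,
          integral_const_mul]
    _ ≤ M / ε ^ 4 * (Real.sqrt (∫ ω, (tm1 (X ω) - muE (X ω)) ^ 2 ∂P) *
            Real.sqrt (∫ ω, (tmY (X ω) - muYE (X ω)) ^ 2 ∂P))
        + M ^ 2 / ε ^ 4 * (Real.sqrt (∫ ω, (tm1 (X ω) - muE (X ω)) ^ 2 ∂P) *
            Real.sqrt (∫ ω, (tπt (X ω) - πt (X ω)) ^ 2 ∂P))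
        + M ^ 2 / ε ^ 4 * (Real.sqrt (∫ ω, (tmY (X ω) - muYE (X ω)) ^ 2 ∂P) *
            Real.sqrt (∫ ω, (tπt (X ω) - πt (X ω)) ^ 2 ∂P))
        + M / ε ^ 4 * Real.sqrt (∫ ω, (tm1 (X ω) - muE (X ω)) ^ 2 ∂P) ^ 2 := by
        refine add_le_add (add_le_add (add_le_add ?_ ?_) ?_) ?_
        · exact mul_le_mul_of_nonneg_left cs₁ (by positivity)
        · exact mul_le_mul_of_nonneg_left cs₂ (by positivity)
        · exact mul_le_mul_of_nonneg_left cs₃ (by positivity)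
        · exact le_of_eq (congrArg _ e4)
end

section
/- L² stability of the uncentered influence function (Lemma 2, deterministic core): there exist constants D₁, D₂, D₃ depending only on ε and M such that ‖ν̃ − ν_t(P)‖_{L²(P)} ≤ D₁‖π̃_t−π_t‖ + D₂‖m̃₁−μ₁‖ + D₃‖m̃_Y−μ_Y‖, where ‖f‖ := ( E[f(X)²] )^{1/2} for functions of X and ‖ν̃ − ν_t(P)‖_{L²(P)} := ( E[ (ν̃(X,T,Y) − ν_t(P)(X,T,Y))² ] )^{1/2}. In particular, if the nuisance functions converge to the truth in L² at any rate, then ν̃ converges to ν_t(P) in L²(P). -/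
open MeasureTheory Real

universe u

lemma frac_diff_bound (u ut v vt A B d : ℝ) (hd : 0 < d)
    (hv : d ≤ v) (hvt : d ≤ vt) (hvB : v ≤ B) (huA : |u| ≤ A) :
    |ut / vt - u / v| ≤ (B * |ut - u| + A * |vt - v|) / d ^ 2 := by
  have hv0 : (0:ℝ) < v := hd.trans_le hv
  have hvt0 : (0:ℝ) < vt := hd.trans_le hvt
  have hkey : ut / vt - u / v = ((ut - u) * v + u * (v - vt)) / (vt * v) := by
    field_simp; ring
  rw [hkey, abs_div, abs_of_pos (mul_pos hvt0 hv0)]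
  have hB : (0:ℝ) < B := hv0.trans_le hvB
  have hA : (0:ℝ) ≤ A := (abs_nonneg u).trans huA
  apply div_le_div₀ (add_nonneg (mul_nonneg hB.le (abs_nonneg _)) (mul_nonneg hA (abs_nonneg _))) ?_ (by positivity) (by nlinarith)
  calc |(ut - u) * v + u * (v - vt)| ≤ |(ut - u) * v| + |u * (v - vt)| := abs_add_le _ _
    _ = |ut - u| * |v| + |u| * |v - vt| := by rw [abs_mul, abs_mul]
    _ ≤ |ut - u| * B + A * |vt - v| := by
        rw [abs_of_pos hv0, abs_sub_comm v vt]
        exact add_le_add (mul_le_mul_of_nonneg_left hvB (abs_nonneg _))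
          (mul_le_mul_of_nonneg_right huA (abs_nonneg _))
    _ = B * |ut - u| + A * |vt - v| := by ring

lemma abs_mul3_le (x y z X Y : ℝ) (hx : |x| ≤ X) (hy : |y| ≤ Y) :
    |x * y * z| ≤ X * Y * |z| := by
  have hX : 0 ≤ X := (abs_nonneg x).trans hx
  have hY : 0 ≤ Y := (abs_nonneg y).trans hy
  rw [abs_mul, abs_mul]
  exact mul_le_mul_of_nonneg_right
    (mul_le_mul hx hy (abs_nonneg y) hX) (abs_nonneg z)

lemma sq_le_three (x C a b c : ℝ) (hC : 0 ≤ C) (h : |x| ≤ C * (|a| + |b| + |c|)) :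
    x ^ 2 ≤ 3 * C ^ 2 * (a ^ 2 + b ^ 2 + c ^ 2) := by
  have h2 : x ^ 2 ≤ (C * (|a| + |b| + |c|)) ^ 2 := by
    rw [← sq_abs x]; exact pow_le_pow_left₀ (abs_nonneg x) h 2
  have h3 : (|a| + |b| + |c|) ^ 2 ≤ 3 * (a ^ 2 + b ^ 2 + c ^ 2) := by
    nlinarith [sq_abs a, sq_abs b, sq_abs c, sq_nonneg (|a| - |b|), sq_nonneg (|a| - |c|),
      sq_nonneg (|b| - |c|)]
  nlinarith [mul_le_mul_of_nonneg_left h3 (sq_nonneg C)]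

lemma sqrt_add_le' (x y : ℝ) (hx : 0 ≤ x) (hy : 0 ≤ y) :
    Real.sqrt (x + y) ≤ Real.sqrt x + Real.sqrt y := by
  rw [← Real.sqrt_sq (by positivity : (0:ℝ) ≤ Real.sqrt x + Real.sqrt y)]
  apply Real.sqrt_le_sqrt
  nlinarith [Real.sq_sqrt hx, Real.sq_sqrt hy, Real.sqrt_nonneg x, Real.sqrt_nonneg y]

set_option maxHeartbeats 1000000 in
lemma pointwise_bound (ε N : ℝ) (hε : 0 < ε) (hε2 : ε ≤ 1 - ε) (hN : 1 ≤ N)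
    (Yv E p pt m mt q qt It Is : ℝ)
    (hY : |Yv| ≤ N) (hE : |E| ≤ N)
    (hp1 : ε ≤ p) (hp2 : p ≤ 1 - ε) (hpt1 : ε ≤ pt) (hpt2 : pt ≤ 1 - ε)
    (hm1 : ε ≤ m) (hm2 : m ≤ N) (hmt1 : ε ≤ mt) (hmt2 : mt ≤ N)
    (hq : |q| ≤ N) (hqt : |qt| ≤ N)
    (hIt : |It| ≤ 1) (hIs : |Is| ≤ 1) :
    |(It * (Yv + Yv * E * (1 - pt) / (pt * mt) - E * (1 - pt) * qt / (pt * mt ^ 2))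
        + Is * (qt / mt))
      - (It * (Yv + Yv * E * (1 - p) / (p * m) - E * (1 - p) * q / (p * m ^ 2))
        + Is * (q / m))|
    ≤ (10 * N ^ 4 / ε ^ 6) * (|pt - p| + |mt - m| + |qt - q|) := by
  have hε1 : ε ≤ 1 := by linarith
  have hN0 : (0:ℝ) < N := by linarith
  have hd : (0:ℝ) < ε ^ 3 := by positivity
  have hε6 : (0:ℝ) < ε ^ 6 := by positivity
  have hm0 : (0:ℝ) < m := hε.trans_le hm1
  have hmt0 : (0:ℝ) < mt := hε.trans_le hmt1
  have hp0 : (0:ℝ) < p := hε.trans_le hp1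
  have hpt0 : (0:ℝ) < pt := hε.trans_le hpt1
  -- box bounds for denominators
  have hε3 : ε ^ 3 ≤ ε := pow_le_of_le_one hε.le hε1 (by norm_num)
  have hε32 : ε ^ 3 ≤ ε * ε := by
    calc ε ^ 3 = ε * (ε * ε) := by ring
      _ ≤ 1 * (ε * ε) := mul_le_mul_of_nonneg_right hε1 (by positivity)
      _ = ε * ε := one_mul _
  have hdm : ε ^ 3 ≤ m := hε3.trans hm1
  have hdmt : ε ^ 3 ≤ mt := hε3.trans hmt1
  have hdpm : ε ^ 3 ≤ p * m :=
    hε32.trans (mul_le_mul hp1 hm1 hε.le hp0.le)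
  have hdptmt : ε ^ 3 ≤ pt * mt :=
    hε32.trans (mul_le_mul hpt1 hmt1 hε.le hpt0.le)
  have hmm : m * m ≤ N * N := mul_le_mul hm2 hm2 hm0.le hN0.le
  have hmtmt : mt * mt ≤ N * N := mul_le_mul hmt2 hmt2 hmt0.le hN0.le
  have hdpm2 : ε ^ 3 ≤ p * m ^ 2 := by
    calc ε ^ 3 = ε * (ε * ε) := by ring
      _ ≤ p * (m * m) :=
        mul_le_mul hp1 (mul_le_mul hm1 hm1 hε.le hm0.le) (by positivity) hp0.le
      _ = p * m ^ 2 := by ring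
  have hdptmt2 : ε ^ 3 ≤ pt * mt ^ 2 := by
    calc ε ^ 3 = ε * (ε * ε) := by ring
      _ ≤ pt * (mt * mt) :=
        mul_le_mul hpt1 (mul_le_mul hmt1 hmt1 hε.le hmt0.le) (by positivity) hpt0.le
      _ = pt * mt ^ 2 := by ring
  have hBpm : p * m ≤ N := by
    calc p * m ≤ 1 * N := mul_le_mul (by linarith) hm2 hm0.le one_pos.le
      _ = N := one_mul N
  have hBpm2 : p * m ^ 2 ≤ N ^ 2 := by
    calc p * m ^ 2 = p * (m * m) := by ring
      _ ≤ 1 * (N * N) := mul_le_mul (by linarith) hmm (by positivity) one_pos.le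
      _ = N ^ 2 := by ring
  set a := |pt - p| with ha_def
  set b := |mt - m| with hb_def
  set c := |qt - q| with hc_def
  have ha0 : 0 ≤ a := abs_nonneg _
  have hb0 : 0 ≤ b := abs_nonneg _
  have hc0 : 0 ≤ c := abs_nonneg _
  have h1p : |1 - p| ≤ 1 := by rw [abs_of_nonneg (by linarith)]; linarith
  have h1pt : |1 - pt| ≤ 1 := by rw [abs_of_nonneg (by linarith)]; linarith
  -- first fraction
  have hF1 : |(1 - pt) / (pt * mt) - (1 - p) / (p * m)| * ε ^ 6 ≤ 2 * N * a + b := by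
    have h := frac_diff_bound (1 - p) (1 - pt) (p * m) (pt * mt) 1 N (ε ^ 3) hd
      hdpm hdptmt hBpm h1p
    rw [le_div_iff₀ (by positivity)] at h
    have e1 : |1 - pt - (1 - p)| = a := by
      have : (1 : ℝ) - pt - (1 - p) = -(pt - p) := by ring
      rw [this, abs_neg]
    have e2 : |pt * mt - p * m| ≤ N * a + b := by
      calc |pt * mt - p * m| = |(pt - p) * mt + p * (mt - m)| := by congr 1; ring
        _ ≤ |(pt - p) * mt| + |p * (mt - m)| := abs_add_le _ _
        _ = a * |mt| + |p| * b := by rw [abs_mul, abs_mul]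
        _ ≤ a * N + 1 * b := add_le_add
            (mul_le_mul_of_nonneg_left (by rw [abs_of_pos hmt0]; exact hmt2) ha0)
            (mul_le_mul_of_nonneg_right (by rw [abs_of_pos hp0]; linarith) hb0)
        _ = N * a + b := by ring
    calc |(1 - pt) / (pt * mt) - (1 - p) / (p * m)| * ε ^ 6
        = |(1 - pt) / (pt * mt) - (1 - p) / (p * m)| * (ε ^ 3) ^ 2 := by ring
      _ ≤ N * |1 - pt - (1 - p)| + 1 * |pt * mt - p * m| := h
      _ ≤ N * a + 1 * (N * a + b) := by
          rw [e1]; exact add_le_add_right (by linarith [e2]) _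
      _ = 2 * N * a + b := by ring
  -- second fraction
  have hF2 : |((1 - pt) * qt) / (pt * mt ^ 2) - ((1 - p) * q) / (p * m ^ 2)| * ε ^ 6
      ≤ 2 * N ^ 3 * a + 2 * N ^ 2 * b + N ^ 2 * c := by
    have hu : |(1 - p) * q| ≤ N := by
      rw [abs_mul]
      calc |1 - p| * |q| ≤ 1 * N := mul_le_mul h1p hq (abs_nonneg _) one_pos.le
        _ = N := one_mul N
    have h := frac_diff_bound ((1 - p) * q) ((1 - pt) * qt) (p * m ^ 2) (pt * mt ^ 2) N (N ^ 2)
      (ε ^ 3) hd hdpm2 hdptmt2 hBpm2 hu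
    rw [le_div_iff₀ (by positivity)] at h
    have e1 : |(1 - pt) * qt - (1 - p) * q| ≤ N * a + c := by
      calc |(1 - pt) * qt - (1 - p) * q| = |(1 - pt) * (qt - q) + (p - pt) * q| := by congr 1; ring
        _ ≤ |(1 - pt) * (qt - q)| + |(p - pt) * q| := abs_add_le _ _
        _ = |1 - pt| * c + |p - pt| * |q| := by rw [abs_mul, abs_mul]
        _ ≤ 1 * c + a * N := by
            refine add_le_add (mul_le_mul_of_nonneg_right h1pt hc0) ?_
            rw [abs_sub_comm]
            exact mul_le_mul_of_nonneg_left hq ha0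
        _ = N * a + c := by ring
    have e2 : |pt * mt ^ 2 - p * m ^ 2| ≤ N ^ 2 * a + 2 * N * b := by
      calc |pt * mt ^ 2 - p * m ^ 2| = |(pt - p) * mt ^ 2 + p * ((mt - m) * (mt + m))| := by
            congr 1; ring
        _ ≤ |(pt - p) * mt ^ 2| + |p * ((mt - m) * (mt + m))| := abs_add_le _ _
        _ = a * |mt ^ 2| + |p| * (b * |mt + m|) := by rw [abs_mul, abs_mul, abs_mul]
        _ ≤ a * N ^ 2 + 1 * (b * (2 * N)) := by
            refine add_le_add (mul_le_mul_of_nonneg_left ?_ ha0)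
              (mul_le_mul (by rw [abs_of_pos hp0]; linarith)
                (mul_le_mul_of_nonneg_left (by rw [abs_of_pos (by linarith : (0:ℝ) < mt + m)]; linarith) hb0)
                (by positivity) one_pos.le)
            rw [abs_of_nonneg (by positivity)]
            calc mt ^ 2 = mt * mt := by ring
              _ ≤ N * N := hmtmt
              _ = N ^ 2 := by ring
        _ = N ^ 2 * a + 2 * N * b := by ring
    calc |((1 - pt) * qt) / (pt * mt ^ 2) - ((1 - p) * q) / (p * m ^ 2)| * ε ^ 6
        = |((1 - pt) * qt) / (pt * mt ^ 2) - ((1 - p) * q) / (p * m ^ 2)| * (ε ^ 3) ^ 2 := by ring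
      _ ≤ N ^ 2 * |(1 - pt) * qt - (1 - p) * q| + N * |pt * mt ^ 2 - p * m ^ 2| := h
      _ ≤ N ^ 2 * (N * a + c) + N * (N ^ 2 * a + 2 * N * b) :=
          add_le_add (mul_le_mul_of_nonneg_left e1 (by positivity))
            (mul_le_mul_of_nonneg_left e2 hN0.le)
      _ = 2 * N ^ 3 * a + 2 * N ^ 2 * b + N ^ 2 * c := by ring
  -- third fraction
  have hF3 : |qt / mt - q / m| * ε ^ 6 ≤ N * c + N * b := by
    have h := frac_diff_bound q qt m mt N N (ε ^ 3) hd hdm hdmt hm2 hq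
    rw [le_div_iff₀ (by positivity)] at h
    calc |qt / mt - q / m| * ε ^ 6 = |qt / mt - q / m| * (ε ^ 3) ^ 2 := by ring
      _ ≤ N * |qt - q| + N * |mt - m| := h
      _ = N * c + N * b := rfl
  -- combine
  have hYE : |Yv * E| ≤ N ^ 2 := by
    rw [abs_mul]
    calc |Yv| * |E| ≤ N * N := mul_le_mul hY hE (abs_nonneg _) hN0.le
      _ = N ^ 2 := by ring
  have hid : (It * (Yv + Yv * E * (1 - pt) / (pt * mt) - E * (1 - pt) * qt / (pt * mt ^ 2))
        + Is * (qt / mt))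
      - (It * (Yv + Yv * E * (1 - p) / (p * m) - E * (1 - p) * q / (p * m ^ 2))
        + Is * (q / m))
      = It * (Yv * E) * ((1 - pt) / (pt * mt) - (1 - p) / (p * m))
        - It * E * (((1 - pt) * qt) / (pt * mt ^ 2) - ((1 - p) * q) / (p * m ^ 2))
        + Is * 1 * (qt / mt - q / m) := by ring
  rw [hid]
  have habs : |It * (Yv * E) * ((1 - pt) / (pt * mt) - (1 - p) / (p * m))
        - It * E * (((1 - pt) * qt) / (pt * mt ^ 2) - ((1 - p) * q) / (p * m ^ 2))
        + Is * 1 * (qt / mt - q / m)|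
      ≤ 1 * N ^ 2 * |(1 - pt) / (pt * mt) - (1 - p) / (p * m)|
        + 1 * N * |((1 - pt) * qt) / (pt * mt ^ 2) - ((1 - p) * q) / (p * m ^ 2)|
        + 1 * 1 * |qt / mt - q / m| := by
    calc _ ≤ |It * (Yv * E) * ((1 - pt) / (pt * mt) - (1 - p) / (p * m))
          - It * E * (((1 - pt) * qt) / (pt * mt ^ 2) - ((1 - p) * q) / (p * m ^ 2))|
          + |Is * 1 * (qt / mt - q / m)| := abs_add_le _ _
      _ ≤ |It * (Yv * E) * ((1 - pt) / (pt * mt) - (1 - p) / (p * m))|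
          + |It * E * (((1 - pt) * qt) / (pt * mt ^ 2) - ((1 - p) * q) / (p * m ^ 2))|
          + |Is * 1 * (qt / mt - q / m)| := add_le_add_left (abs_sub _ _) _
      _ ≤ _ := add_le_add (add_le_add (abs_mul3_le _ _ _ _ _ hIt hYE)
              (abs_mul3_le _ _ _ _ _ hIt hE)) (abs_mul3_le _ _ _ _ _ hIs (by norm_num : |(1:ℝ)| ≤ 1))
  refine habs.trans ?_
  rw [div_mul_eq_mul_div, le_div_iff₀ hε6]
  have expand : (1 * N ^ 2 * |(1 - pt) / (pt * mt) - (1 - p) / (p * m)|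
        + 1 * N * |((1 - pt) * qt) / (pt * mt ^ 2) - ((1 - p) * q) / (p * m ^ 2)|
        + 1 * 1 * |qt / mt - q / m|) * ε ^ 6
      = N ^ 2 * (|(1 - pt) / (pt * mt) - (1 - p) / (p * m)| * ε ^ 6)
        + N * (|((1 - pt) * qt) / (pt * mt ^ 2) - ((1 - p) * q) / (p * m ^ 2)| * ε ^ 6)
        + |qt / mt - q / m| * ε ^ 6 := by ring
  rw [expand]
  have hN4a : N ≤ N ^ 4 := by
    calc N = N ^ 1 := (pow_one N).symm
      _ ≤ N ^ 4 := pow_le_pow_right₀ hN (by norm_num)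
  have hN4b : N ^ 2 ≤ N ^ 4 := pow_le_pow_right₀ hN (by norm_num)
  have hN4c : N ^ 3 ≤ N ^ 4 := pow_le_pow_right₀ hN (by norm_num)
  calc N ^ 2 * (|(1 - pt) / (pt * mt) - (1 - p) / (p * m)| * ε ^ 6)
        + N * (|((1 - pt) * qt) / (pt * mt ^ 2) - ((1 - p) * q) / (p * m ^ 2)| * ε ^ 6)
        + |qt / mt - q / m| * ε ^ 6
      ≤ N ^ 2 * (2 * N * a + b) + N * (2 * N ^ 3 * a + 2 * N ^ 2 * b + N ^ 2 * c)
        + (N * c + N * b) :=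
        add_le_add (add_le_add (mul_le_mul_of_nonneg_left hF1 (by positivity))
          (mul_le_mul_of_nonneg_left hF2 hN0.le)) hF3
    _ = (2 * N ^ 3 + 2 * N ^ 4) * a + (N ^ 2 + 2 * N ^ 3 + N) * b + (N ^ 3 + N) * c := by
        ring
    _ ≤ 10 * N ^ 4 * a + 10 * N ^ 4 * b + 10 * N ^ 4 * c := by
        have hN40 : (0:ℝ) ≤ N ^ 4 := by positivity
        refine add_le_add (add_le_add ?_ ?_) ?_
        · exact mul_le_mul_of_nonneg_right (by linarith) ha0
        · exact mul_le_mul_of_nonneg_right (by linarith) hb0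
        · exact mul_le_mul_of_nonneg_right (by linarith) hc0
    _ = 10 * N ^ 4 * (a + b + c) := by ring


lemma sq_norm_le (x K : ℝ) (h : |x| ≤ K) : ‖x ^ 2‖ ≤ K ^ 2 := by
  rw [Real.norm_eq_abs, abs_of_nonneg (sq_nonneg x), ← sq_abs]
  exact pow_le_pow_left₀ (abs_nonneg x) h 2

/-- L² stability of the uncentered influence function (Lemma 2,
deterministic core): there exist constants `D₁, D₂, D₃` depending only on `ε` and `M` such that
`‖ν̃ − ν_t(P)‖_{L²(P)} ≤ D₁‖π̃_t−π_t‖ + D₂‖m̃₁−μ₁‖ + D₃‖m̃_Y−μ_Y‖`. -/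
theorem influence_function_L2_stability (ε M : ℝ) (hε : 0 < ε) (hεM : ε ≤ M) :
    ∃ D₁ D₂ D₃ : ℝ,
      ∀ (Ω : Type u) [MeasurableSpace Ω] (P : Measure Ω) [IsProbabilityMeasure P]
        (p : ℕ) (X : Ω → (Fin p → ℝ)) (T : Ω → ℝ) (Y : Ω → ℝ),
        Measurable X → Measurable T → Measurable Y →
        (∀ ω, T ω = 0 ∨ T ω = 1) →
        ∀ (t : ℝ), (t = 0 ∨ t = 1) →
        ∀ (s : ℝ → ℝ), Measurable s →
        ∀ (γ : ℝ),
        -- a.s. boundedness of the outcome and of the exponential tilt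
        (∀ᵐ ω ∂P, |Y ω| ≤ M) →
        (∀ᵐ ω ∂P, Real.exp (γ * s (Y ω)) ≤ M) →
        ∀ (πt πs : (Fin p → ℝ) → ℝ), Measurable πt → Measurable πs →
        -- versions of the conditional treatment probabilities given `σ(X)`
        ((fun ω => πt (X ω)) =ᵐ[P]
          P[(fun ω => if T ω = t then (1 : ℝ) else 0) |
            MeasurableSpace.comap X inferInstance]) →
        ((fun ω => πs (X ω)) =ᵐ[P]
          P[(fun ω => if T ω = 1 - t then (1 : ℝ) else 0) |
            MeasurableSpace.comap X inferInstance]) →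
        -- positivity
        (∀ᵐ ω ∂P, ε ≤ πt (X ω) ∧ πt (X ω) ≤ 1 - ε) →
        -- versions of the conditional means `muE = μ₁(X)`, `muYE = μ_Y(X)` with a.s. bounds
        ∀ (muE muYE : (Fin p → ℝ) → ℝ),
        Measurable muE → Measurable muYE →
        ((fun ω => muE (X ω)) =ᵐ[P] fun ω =>
          (P[(fun ω => Real.exp (γ * s (Y ω)) * (if T ω = t then (1 : ℝ) else 0)) |
            MeasurableSpace.comap X inferInstance]) ω / πt (X ω)) →
        ((fun ω => muYE (X ω)) =ᵐ[P] fun ω =>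
          (P[(fun ω => Y ω * Real.exp (γ * s (Y ω)) * (if T ω = t then (1 : ℝ) else 0)) |
            MeasurableSpace.comap X inferInstance]) ω / πt (X ω)) →
        (∀ᵐ ω ∂P, ε ≤ muE (X ω) ∧ muE (X ω) ≤ M) →
        (∀ᵐ ω ∂P, |muYE (X ω)| ≤ M) →
        -- nuisance functions
        ∀ (tπt tm1 tmY : (Fin p → ℝ) → ℝ),
        Measurable tπt → Measurable tm1 → Measurable tmY →
        (∀ x, tπt x ∈ Set.Icc ε (1 - ε)) →
        (∀ x, tm1 x ∈ Set.Icc ε M) →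
        (∀ x, tmY x ∈ Set.Icc (-M) M) →
        -- the L² stability bound
        Real.sqrt (∫ ω,
            (((if T ω = t then (1 : ℝ) else 0) *
                (Y ω + Y ω * Real.exp (γ * s (Y ω)) * (1 - tπt (X ω)) /
                    (tπt (X ω) * tm1 (X ω))
                  - Real.exp (γ * s (Y ω)) * (1 - tπt (X ω)) * tmY (X ω) /
                      (tπt (X ω) * tm1 (X ω) ^ 2))
              + (if T ω = 1 - t then (1 : ℝ) else 0) * (tmY (X ω) / tm1 (X ω)))
            - ((if T ω = t then (1 : ℝ) else 0) *
                (Y ω + Y ω * Real.exp (γ * s (Y ω)) * πs (X ω) / (πt (X ω) * muE (X ω))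
                  - Real.exp (γ * s (Y ω)) * πs (X ω) * muYE (X ω) /
                      (πt (X ω) * muE (X ω) ^ 2))
              + (if T ω = 1 - t then (1 : ℝ) else 0) * (muYE (X ω) / muE (X ω)))) ^ 2 ∂P) ≤
          D₁ * Real.sqrt (∫ ω, (tπt (X ω) - πt (X ω)) ^ 2 ∂P) +
          D₂ * Real.sqrt (∫ ω, (tm1 (X ω) - muE (X ω)) ^ 2 ∂P) +
          D₃ * Real.sqrt (∫ ω, (tmY (X ω) - muYE (X ω)) ^ 2 ∂P) := by
  set N := max M 1 with hN_def
  set C := 10 * N ^ 4 / ε ^ 6 with hC_def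
  have hN1 : (1:ℝ) ≤ N := le_max_right M 1
  have hMN : M ≤ N := le_max_left M 1
  have hN0 : (0:ℝ) < N := lt_of_lt_of_le one_pos hN1
  have hC0 : (0:ℝ) ≤ C := by positivity
  refine ⟨2 * C, 2 * C, 2 * C, ?_⟩
  intro Ω _ P _ p X T Y hX hT hY hTr t ht s hs γ hYbd hEbd πt πs hπt hπs hπtcond hπscond hπbd
    muE muYE hmuE hmuYE _ _ hmuEbd hmuYbd tπt tm1 tmY htπt htm1 htmY htπtbd htm1bd htmYbd
  have hε2 : ε ≤ 1 - ε := by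
    have h := htπtbd (fun _ => 0)
    exact le_trans h.1 h.2
  -- measurability of the indicator functions
  have hmind_t : Measurable fun ω => if T ω = t then (1:ℝ) else 0 :=
    Measurable.ite (hT (measurableSet_singleton t)) measurable_const measurable_const
  have hmind_s : Measurable fun ω => if T ω = 1 - t then (1:ℝ) else 0 :=
    Measurable.ite (hT (measurableSet_singleton (1 - t))) measurable_const measurable_const
  have hint_t : Integrable (fun ω => if T ω = t then (1:ℝ) else 0) P := by
    refine (integrable_const (1:ℝ)).mono' hmind_t.aestronglyMeasurable ?_
    filter_upwards with ω
    by_cases h : T ω = t <;> simp [h]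
  have hint_s : Integrable (fun ω => if T ω = 1 - t then (1:ℝ) else 0) P := by
    refine (integrable_const (1:ℝ)).mono' hmind_s.aestronglyMeasurable ?_
    filter_upwards with ω
    by_cases h : T ω = 1 - t <;> simp [h]
  -- the two conditional treatment probabilities sum to one
  have hle : MeasurableSpace.comap X inferInstance ≤ (inferInstance : MeasurableSpace Ω) :=
    hX.comap_le
  have hsum_fun : (fun ω => if T ω = t then (1:ℝ) else 0)
      + (fun ω => if T ω = 1 - t then (1:ℝ) else 0) = fun _ => (1:ℝ) := by
    funext ω
    simp only [Pi.add_apply]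
    rcases hTr ω with h | h <;> rcases ht with rfl | rfl <;> norm_num [h]
  have hπsum : ∀ᵐ ω ∂P, πs (X ω) = 1 - πt (X ω) := by
    have h1 : (fun ω => πt (X ω) + πs (X ω)) =ᵐ[P] fun _ => (1:ℝ) := by
      calc (fun ω => πt (X ω) + πs (X ω))
          =ᵐ[P] P[(fun ω => if T ω = t then (1:ℝ) else 0) | MeasurableSpace.comap X inferInstance]
            + P[(fun ω => if T ω = 1 - t then (1:ℝ) else 0) |
                MeasurableSpace.comap X inferInstance] := hπtcond.add hπscond
        _ =ᵐ[P] P[(fun ω => if T ω = t then (1:ℝ) else 0)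
            + (fun ω => if T ω = 1 - t then (1:ℝ) else 0) |
              MeasurableSpace.comap X inferInstance] := (condExp_add hint_t hint_s _).symm
        _ = P[(fun _ => (1:ℝ)) | MeasurableSpace.comap X inferInstance] := by rw [hsum_fun]
        _ = fun _ => (1:ℝ) := condExp_const hle 1
    filter_upwards [h1] with ω h
    have : πt (X ω) + πs (X ω) = 1 := h
    linarith
  -- a.e. bounds on the three nuisance errors
  have habound : ∀ᵐ ω ∂P, |tπt (X ω) - πt (X ω)| ≤ 1 := by
    filter_upwards [hπbd] with ω h
    have h2 := htπtbd (X ω)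
    rw [abs_le]
    constructor <;> [skip; skip] <;>
      [linarith [h2.1, h.2, hε.le]; linarith [h2.2, h.1, hε.le]]
  have hbbound : ∀ᵐ ω ∂P, |tm1 (X ω) - muE (X ω)| ≤ N := by
    filter_upwards [hmuEbd] with ω h
    have h2 := htm1bd (X ω)
    rw [abs_le]
    constructor
    · linarith [h2.1, h.2, hMN, hε.le]
    · linarith [h2.2, h.1, hMN, hε.le]
  have hcbound : ∀ᵐ ω ∂P, |tmY (X ω) - muYE (X ω)| ≤ 2 * N := by
    filter_upwards [hmuYbd] with ω h
    have h2 := htmYbd (X ω)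
    have h3 := abs_le.mp h
    rw [abs_le]
    constructor
    · linarith [h2.1, h3.2, hMN]
    · linarith [h2.2, h3.1, hMN]
  -- the a.e. pointwise Lipschitz bound
  have hkeyabs : ∀ᵐ ω ∂P,
      |(((if T ω = t then (1 : ℝ) else 0) *
            (Y ω + Y ω * Real.exp (γ * s (Y ω)) * (1 - tπt (X ω)) / (tπt (X ω) * tm1 (X ω))
              - Real.exp (γ * s (Y ω)) * (1 - tπt (X ω)) * tmY (X ω) /
                  (tπt (X ω) * tm1 (X ω) ^ 2))
          + (if T ω = 1 - t then (1 : ℝ) else 0) * (tmY (X ω) / tm1 (X ω)))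
        - ((if T ω = t then (1 : ℝ) else 0) *
            (Y ω + Y ω * Real.exp (γ * s (Y ω)) * πs (X ω) / (πt (X ω) * muE (X ω))
              - Real.exp (γ * s (Y ω)) * πs (X ω) * muYE (X ω) /
                  (πt (X ω) * muE (X ω) ^ 2))
          + (if T ω = 1 - t then (1 : ℝ) else 0) * (muYE (X ω) / muE (X ω))))|
      ≤ C * (|tπt (X ω) - πt (X ω)| + |tm1 (X ω) - muE (X ω)| + |tmY (X ω) - muYE (X ω)|) := by
    filter_upwards [hYbd, hEbd, hπbd, hmuEbd, hmuYbd, hπsum] with ω h1 h2 h3 h4 h5 h6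
    rw [h6]
    have hexppos := Real.exp_pos (γ * s (Y ω))
    refine pointwise_bound ε N hε hε2 hN1 (Y ω) (Real.exp (γ * s (Y ω))) (πt (X ω)) (tπt (X ω))
      (muE (X ω)) (tm1 (X ω)) (muYE (X ω)) (tmY (X ω))
      (if T ω = t then (1:ℝ) else 0) (if T ω = 1 - t then (1:ℝ) else 0)
      (h1.trans hMN) ?_ h3.1 h3.2 (htπtbd (X ω)).1 (htπtbd (X ω)).2
      h4.1 (h4.2.trans hMN) (htm1bd (X ω)).1 ((htm1bd (X ω)).2.trans hMN)
      (h5.trans hMN) ?_ ?_ ?_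
    · rw [abs_of_pos hexppos]; exact h2.trans hMN
    · have h7 := htmYbd (X ω)
      rw [abs_le]; exact ⟨by linarith [h7.1, hMN], by linarith [h7.2, hMN]⟩
    · by_cases h : T ω = t <;> simp [h]
    · by_cases h : T ω = 1 - t <;> simp [h]
  have key : ∀ᵐ ω ∂P,
      (((if T ω = t then (1 : ℝ) else 0) *
            (Y ω + Y ω * Real.exp (γ * s (Y ω)) * (1 - tπt (X ω)) / (tπt (X ω) * tm1 (X ω))
              - Real.exp (γ * s (Y ω)) * (1 - tπt (X ω)) * tmY (X ω) /
                  (tπt (X ω) * tm1 (X ω) ^ 2))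
          + (if T ω = 1 - t then (1 : ℝ) else 0) * (tmY (X ω) / tm1 (X ω)))
        - ((if T ω = t then (1 : ℝ) else 0) *
            (Y ω + Y ω * Real.exp (γ * s (Y ω)) * πs (X ω) / (πt (X ω) * muE (X ω))
              - Real.exp (γ * s (Y ω)) * πs (X ω) * muYE (X ω) /
                  (πt (X ω) * muE (X ω) ^ 2))
          + (if T ω = 1 - t then (1 : ℝ) else 0) * (muYE (X ω) / muE (X ω)))) ^ 2
      ≤ 3 * C ^ 2 * ((tπt (X ω) - πt (X ω)) ^ 2 + (tm1 (X ω) - muE (X ω)) ^ 2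
          + (tmY (X ω) - muYE (X ω)) ^ 2) := by
    filter_upwards [hkeyabs] with ω h
    exact sq_le_three _ C _ _ _ hC0 h
  -- measurability of the integrands
  have hmexp : Measurable fun ω => Real.exp (γ * s (Y ω)) :=
    Real.measurable_exp.comp (measurable_const.mul (hs.comp hY))
  have hmf1 : Measurable fun ω =>
      Y ω + Y ω * Real.exp (γ * s (Y ω)) * (1 - tπt (X ω)) / (tπt (X ω) * tm1 (X ω))
        - Real.exp (γ * s (Y ω)) * (1 - tπt (X ω)) * tmY (X ω) /
            (tπt (X ω) * tm1 (X ω) ^ 2) := by fun_prop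
  have hmf2 : Measurable fun ω => tmY (X ω) / tm1 (X ω) := by fun_prop
  have hmf3 : Measurable fun ω =>
      Y ω + Y ω * Real.exp (γ * s (Y ω)) * πs (X ω) / (πt (X ω) * muE (X ω))
        - Real.exp (γ * s (Y ω)) * πs (X ω) * muYE (X ω) / (πt (X ω) * muE (X ω) ^ 2) := by
    fun_prop
  have hmf4 : Measurable fun ω => muYE (X ω) / muE (X ω) := by fun_prop
  have hmΔ : Measurable fun ω =>
      (((if T ω = t then (1 : ℝ) else 0) *
            (Y ω + Y ω * Real.exp (γ * s (Y ω)) * (1 - tπt (X ω)) / (tπt (X ω) * tm1 (X ω))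
              - Real.exp (γ * s (Y ω)) * (1 - tπt (X ω)) * tmY (X ω) /
                  (tπt (X ω) * tm1 (X ω) ^ 2))
          + (if T ω = 1 - t then (1 : ℝ) else 0) * (tmY (X ω) / tm1 (X ω)))
        - ((if T ω = t then (1 : ℝ) else 0) *
            (Y ω + Y ω * Real.exp (γ * s (Y ω)) * πs (X ω) / (πt (X ω) * muE (X ω))
              - Real.exp (γ * s (Y ω)) * πs (X ω) * muYE (X ω) /
                  (πt (X ω) * muE (X ω) ^ 2))
          + (if T ω = 1 - t then (1 : ℝ) else 0) * (muYE (X ω) / muE (X ω)))) :=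
    ((hmind_t.mul hmf1).add (hmind_s.mul hmf2)).sub
      ((hmind_t.mul hmf3).add (hmind_s.mul hmf4))
  -- integrability
  have hIa : Integrable (fun ω => (tπt (X ω) - πt (X ω)) ^ 2) P := by
    refine (integrable_const ((1:ℝ) ^ 2)).mono'
      (((htπt.comp hX).sub (hπt.comp hX)).pow_const 2).aestronglyMeasurable ?_
    filter_upwards [habound] with ω h
    exact sq_norm_le _ _ h
  have hIb : Integrable (fun ω => (tm1 (X ω) - muE (X ω)) ^ 2) P := by
    refine (integrable_const (N ^ 2)).mono'
      (((htm1.comp hX).sub (hmuE.comp hX)).pow_const 2).aestronglyMeasurable ?_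
    filter_upwards [hbbound] with ω h
    exact sq_norm_le _ _ h
  have hIc : Integrable (fun ω => (tmY (X ω) - muYE (X ω)) ^ 2) P := by
    refine (integrable_const ((2 * N) ^ 2)).mono'
      (((htmY.comp hX).sub (hmuYE.comp hX)).pow_const 2).aestronglyMeasurable ?_
    filter_upwards [hcbound] with ω h
    exact sq_norm_le _ _ h
  have hIΔ : Integrable (fun ω =>
      (((if T ω = t then (1 : ℝ) else 0) *
            (Y ω + Y ω * Real.exp (γ * s (Y ω)) * (1 - tπt (X ω)) / (tπt (X ω) * tm1 (X ω))
              - Real.exp (γ * s (Y ω)) * (1 - tπt (X ω)) * tmY (X ω) /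
                  (tπt (X ω) * tm1 (X ω) ^ 2))
          + (if T ω = 1 - t then (1 : ℝ) else 0) * (tmY (X ω) / tm1 (X ω)))
        - ((if T ω = t then (1 : ℝ) else 0) *
            (Y ω + Y ω * Real.exp (γ * s (Y ω)) * πs (X ω) / (πt (X ω) * muE (X ω))
              - Real.exp (γ * s (Y ω)) * πs (X ω) * muYE (X ω) /
                  (πt (X ω) * muE (X ω) ^ 2))
          + (if T ω = 1 - t then (1 : ℝ) else 0) * (muYE (X ω) / muE (X ω)))) ^ 2) P := by
    refine (integrable_const ((C * (1 + 3 * N)) ^ 2)).mono'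
      (hmΔ.pow_const 2).aestronglyMeasurable ?_
    filter_upwards [hkeyabs, habound, hbbound, hcbound] with ω h ha hb hc
    refine sq_norm_le _ _ (h.trans ?_)
    have : |tπt (X ω) - πt (X ω)| + |tm1 (X ω) - muE (X ω)| + |tmY (X ω) - muYE (X ω)|
        ≤ 1 + 3 * N := by linarith
    exact mul_le_mul_of_nonneg_left this hC0
  -- integral comparison
  have hIrhs : Integrable (fun ω => 3 * C ^ 2 * ((tπt (X ω) - πt (X ω)) ^ 2
      + (tm1 (X ω) - muE (X ω)) ^ 2 + (tmY (X ω) - muYE (X ω)) ^ 2)) P :=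
    ((hIa.add hIb).add hIc).const_mul (3 * C ^ 2)
  have hmono := integral_mono_ae hIΔ hIrhs key
  have hsplit : ∫ ω, 3 * C ^ 2 * ((tπt (X ω) - πt (X ω)) ^ 2 + (tm1 (X ω) - muE (X ω)) ^ 2
        + (tmY (X ω) - muYE (X ω)) ^ 2) ∂P
      = 3 * C ^ 2 * (∫ ω, (tπt (X ω) - πt (X ω)) ^ 2 ∂P)
        + 3 * C ^ 2 * (∫ ω, (tm1 (X ω) - muE (X ω)) ^ 2 ∂P)
        + 3 * C ^ 2 * (∫ ω, (tmY (X ω) - muYE (X ω)) ^ 2 ∂P) := by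
    have h1 : ∫ ω, ((tπt (X ω) - πt (X ω)) ^ 2 + (tm1 (X ω) - muE (X ω)) ^ 2
          + (tmY (X ω) - muYE (X ω)) ^ 2) ∂P
        = (∫ ω, ((tπt (X ω) - πt (X ω)) ^ 2 + (tm1 (X ω) - muE (X ω)) ^ 2) ∂P)
          + ∫ ω, (tmY (X ω) - muYE (X ω)) ^ 2 ∂P := integral_add (hIa.add hIb) hIc
    have h2 : ∫ ω, ((tπt (X ω) - πt (X ω)) ^ 2 + (tm1 (X ω) - muE (X ω)) ^ 2) ∂P
        = (∫ ω, (tπt (X ω) - πt (X ω)) ^ 2 ∂P) + ∫ ω, (tm1 (X ω) - muE (X ω)) ^ 2 ∂P :=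
      integral_add hIa hIb
    rw [integral_const_mul, h1, h2]
    ring
  have hia0 : 0 ≤ ∫ ω, (tπt (X ω) - πt (X ω)) ^ 2 ∂P := integral_nonneg fun ω => sq_nonneg _
  have hib0 : 0 ≤ ∫ ω, (tm1 (X ω) - muE (X ω)) ^ 2 ∂P := integral_nonneg fun ω => sq_nonneg _
  have hic0 : 0 ≤ ∫ ω, (tmY (X ω) - muYE (X ω)) ^ 2 ∂P := integral_nonneg fun ω => sq_nonneg _
  have per : ∀ r : ℝ, 0 ≤ r → Real.sqrt (3 * C ^ 2 * r) ≤ 2 * C * Real.sqrt r := by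
    intro r hr
    rw [Real.sqrt_mul (by positivity) r]
    refine mul_le_mul_of_nonneg_right ?_ (Real.sqrt_nonneg r)
    rw [show (2 * C : ℝ) = Real.sqrt ((2 * C) ^ 2) from (Real.sqrt_sq (by positivity)).symm]
    refine Real.sqrt_le_sqrt ?_
    nlinarith [sq_nonneg C]
  calc Real.sqrt (∫ ω,
        (((if T ω = t then (1 : ℝ) else 0) *
            (Y ω + Y ω * Real.exp (γ * s (Y ω)) * (1 - tπt (X ω)) / (tπt (X ω) * tm1 (X ω))
              - Real.exp (γ * s (Y ω)) * (1 - tπt (X ω)) * tmY (X ω) /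
                  (tπt (X ω) * tm1 (X ω) ^ 2))
          + (if T ω = 1 - t then (1 : ℝ) else 0) * (tmY (X ω) / tm1 (X ω)))
        - ((if T ω = t then (1 : ℝ) else 0) *
            (Y ω + Y ω * Real.exp (γ * s (Y ω)) * πs (X ω) / (πt (X ω) * muE (X ω))
              - Real.exp (γ * s (Y ω)) * πs (X ω) * muYE (X ω) /
                  (πt (X ω) * muE (X ω) ^ 2))
          + (if T ω = 1 - t then (1 : ℝ) else 0) * (muYE (X ω) / muE (X ω)))) ^ 2 ∂P)
      ≤ Real.sqrt (3 * C ^ 2 * (∫ ω, (tπt (X ω) - πt (X ω)) ^ 2 ∂P)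
          + 3 * C ^ 2 * (∫ ω, (tm1 (X ω) - muE (X ω)) ^ 2 ∂P)
          + 3 * C ^ 2 * (∫ ω, (tmY (X ω) - muYE (X ω)) ^ 2 ∂P)) := by
        refine Real.sqrt_le_sqrt ?_
        rw [← hsplit]
        exact hmono
    _ ≤ Real.sqrt (3 * C ^ 2 * (∫ ω, (tπt (X ω) - πt (X ω)) ^ 2 ∂P)
          + 3 * C ^ 2 * (∫ ω, (tm1 (X ω) - muE (X ω)) ^ 2 ∂P))
        + Real.sqrt (3 * C ^ 2 * (∫ ω, (tmY (X ω) - muYE (X ω)) ^ 2 ∂P)) :=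
        sqrt_add_le' _ _ (by positivity) (by positivity)
    _ ≤ Real.sqrt (3 * C ^ 2 * (∫ ω, (tπt (X ω) - πt (X ω)) ^ 2 ∂P))
        + Real.sqrt (3 * C ^ 2 * (∫ ω, (tm1 (X ω) - muE (X ω)) ^ 2 ∂P))
        + Real.sqrt (3 * C ^ 2 * (∫ ω, (tmY (X ω) - muYE (X ω)) ^ 2 ∂P)) :=
        add_le_add_left (sqrt_add_le' _ _ (by positivity) (by positivity)) _
    _ ≤ 2 * C * Real.sqrt (∫ ω, (tπt (X ω) - πt (X ω)) ^ 2 ∂P)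
        + 2 * C * Real.sqrt (∫ ω, (tm1 (X ω) - muE (X ω)) ^ 2 ∂P)
        + 2 * C * Real.sqrt (∫ ω, (tmY (X ω) - muYE (X ω)) ^ 2 ∂P) :=
        add_le_add (add_le_add (per _ hia0) (per _ hib0)) (per _ hic0)
end
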